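/- In the group M = G(A ⊆ B) = (A ⊕ B) ⋊_ψ D, the commutator of (a,b,d) and (a',b',d') equals (0, d·ι(a') - d'·ι(a), 0). In particular, the commutator subgroup of M is {0} × ι(A) × {0}, isomorphic to A. -/

import Mathlib

namespace Metabelian

variable {B : Type*} [AddCommGroup B]

/-- The subgroup `A` of `B` is bounded by `n`, i.e. `n • a = 0` for all `a ∈ A`. -/
class BoundedSub (A : AddSubgroup B) (n : ℕ) : Prop where
  bound : ∀ a : A, n • (a : B) = 0

lemma val_smul_eq {n : ℕ} (a : B) (h : n • a = 0) (x : ℕ) : (x % n) • a = x • a := by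
  conv_rhs => rw [← Nat.mod_add_div x n]
  rw [add_nsmul, mul_nsmul, h, smul_zero, add_zero]

/-- Birkhoff's construction `G(A ⊆ B) = (A ⊕ B) ⋊_ψ D` with `D = ℤ/n` where `n` bounds `A`:
the underlying set is `A × B × ℤ/n` and the (multiplicatively written) group operation is
`(a,b,d)·(a',b',d') = (a+a', b + d·ι(a') + b', d+d')`. -/
instance mgroup (A : AddSubgroup B) (n : ℕ) [NeZero n] [BoundedSub A n] :
    Group (A × B × ZMod n) where
  mul x y := (x.1 + y.1, x.2.1 + x.2.2.val • (y.1 : B) + y.2.1, x.2.2 + y.2.2)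
  one := (0, 0, 0)
  inv x := (-x.1, -x.2.1 + x.2.2.val • (x.1 : B), -x.2.2)
  mul_assoc x y z := by
    have hb := BoundedSub.bound (A := A) (n := n)
    refine Prod.ext (add_assoc _ _ _) (Prod.ext ?_ (add_assoc _ _ _))
    show x.2.1 + x.2.2.val • (y.1 : B) + y.2.1 + (x.2.2 + y.2.2).val • (z.1 : B) + z.2.1
        = x.2.1 + x.2.2.val • ((y.1 + z.1 : A) : B) + (y.2.1 + y.2.2.val • (z.1 : B) + z.2.1)
    rw [ZMod.val_add, val_smul_eq _ (hb z.1), AddSubgroup.coe_add, smul_add, add_nsmul]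
    abel
  one_mul x := by
    refine Prod.ext (zero_add _) (Prod.ext ?_ (zero_add _))
    show (0 : B) + (0 : ZMod n).val • (x.1 : B) + x.2.1 = x.2.1
    simp
  mul_one x := by
    refine Prod.ext (add_zero _) (Prod.ext ?_ (add_zero _))
    show x.2.1 + x.2.2.val • ((0 : A) : B) + 0 = x.2.1
    simp
  inv_mul_cancel x := by
    have hb := BoundedSub.bound (A := A) (n := n)
    refine Prod.ext (neg_add_cancel _) (Prod.ext ?_ (neg_add_cancel _))
    show -x.2.1 + x.2.2.val • (x.1 : B) + (-x.2.2).val • (x.1 : B) + x.2.1 = 0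
    have h2 : ((-x.2.2).val + x.2.2.val) % n = 0 := by
      rw [← ZMod.val_add, neg_add_cancel, ZMod.val_zero]
    have h3 : x.2.2.val • (x.1 : B) + (-x.2.2).val • (x.1 : B) = 0 := by
      rw [add_comm, ← add_nsmul, ← val_smul_eq _ (hb x.1), h2, zero_nsmul]
    rw [add_assoc, add_assoc, ← add_assoc (x.2.2.val • (x.1 : B)), h3, zero_add, neg_add_cancel]

open scoped commutatorElement

section Aux

variable (A : AddSubgroup B) (n : ℕ) [NeZero n] [BoundedSub A n]

lemma mul_def (x y : A × B × ZMod n) :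
    x * y = (x.1 + y.1, x.2.1 + x.2.2.val • (y.1 : B) + y.2.1, x.2.2 + y.2.2) := rfl

lemma inv_def (x : A × B × ZMod n) :
    x⁻¹ = (-x.1, -x.2.1 + x.2.2.val • (x.1 : B), -x.2.2) := rfl

lemma one_def : (1 : A × B × ZMod n) = (0, 0, 0) := rfl

lemma smul_val_add (d e : ZMod n) (a : A) :
    (d + e).val • (a : B) = d.val • (a : B) + e.val • (a : B) := by
  rw [ZMod.val_add, val_smul_eq _ (BoundedSub.bound a), add_nsmul]

lemma smul_val_neg (d : ZMod n) (a : A) :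
    (-d).val • (a : B) = -(d.val • (a : B)) := by
  have h : ((-d).val + d.val) % n = 0 := by
    rw [← ZMod.val_add, neg_add_cancel, ZMod.val_zero]
  have h2 := val_smul_eq (a : B) (BoundedSub.bound (n := n) a) ((-d).val + d.val)
  rw [h, zero_nsmul, add_nsmul] at h2
  exact eq_neg_of_add_eq_zero_left h2.symm

lemma smul_val_one (a : A) : (1 : ZMod n).val • (a : B) = (a : B) := by
  have : (1 : ZMod n) = ((1 : ℕ) : ZMod n) := by norm_cast
  rw [this, ZMod.val_natCast, val_smul_eq _ (BoundedSub.bound (n := n) a), one_nsmul]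

lemma comm_formula (x y : A × B × ZMod n) :
    ⁅x, y⁆ = (0, x.2.2.val • (y.1 : B) - y.2.2.val • (x.1 : B), 0) := by
  rw [commutatorElement_def, mul_def, mul_def, mul_def, inv_def, inv_def]
  refine Prod.ext ?_ (Prod.ext ?_ ?_)
  · show x.1 + y.1 + -x.1 + -y.1 = 0
    abel
  · show x.2.1 + x.2.2.val • (y.1 : B) + y.2.1 +
        (x.2.2 + y.2.2).val • ((-x.1 : A) : B) + (-x.2.1 + x.2.2.val • (x.1 : B)) +
        (x.2.2 + y.2.2 + -x.2.2).val • ((-y.1 : A) : B) +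
        (-y.2.1 + y.2.2.val • (y.1 : B)) =
        x.2.2.val • (y.1 : B) - y.2.2.val • (x.1 : B)
    simp only [AddSubgroup.coe_neg, smul_neg, smul_val_add, smul_val_neg]
    abel
  · show x.2.2 + y.2.2 + -x.2.2 + -y.2.2 = 0
    abel

end Aux

/-- In `M = G(A ⊆ B) = (A ⊕ B) ⋊_ψ D`, the commutator of `(a,b,d)` and `(a',b',d')` equals
`(0, d•ι(a') - d'•ι(a), 0)`.  In particular the commutator subgroup of `M` is
`{0} × ι(A) × {0}`, isomorphic to `A`. -/
theorem commutator_of_construction (p m : ℕ) [Fact p.Prime] {B : Type*} [AddCommGroup B]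
    [Finite B] (hpB : ∀ b : B, ∃ k : ℕ, p ^ k • b = 0) (A : AddSubgroup B)
    [BoundedSub A (p ^ m)] (hexp : AddMonoid.exponent A = p ^ m) :
    (∀ x y : A × B × ZMod (p ^ m),
        ⁅x, y⁆ = (0, x.2.2.val • (y.1 : B) - y.2.2.val • (x.1 : B), 0)) ∧
    (∀ g : A × B × ZMod (p ^ m),
        g ∈ commutator (A × B × ZMod (p ^ m)) ↔ g.1 = 0 ∧ g.2.1 ∈ A ∧ g.2.2 = 0) ∧
    Nonempty (↥(commutator (A × B × ZMod (p ^ m))) ≃* Multiplicative A) := by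
  set n := p ^ m with hn
  -- the candidate commutator subgroup
  let K : Subgroup (A × B × ZMod n) :=
    { carrier := {g | g.1 = 0 ∧ g.2.1 ∈ A ∧ g.2.2 = 0}
      one_mem' := ⟨rfl, A.zero_mem, rfl⟩
      mul_mem' := by
        rintro x y ⟨hx1, hx2, hx3⟩ ⟨hy1, hy2, hy3⟩
        refine ⟨?_, ?_, ?_⟩
        · show x.1 + y.1 = 0; rw [hx1, hy1, add_zero]
        · show x.2.1 + x.2.2.val • (y.1 : B) + y.2.1 ∈ A
          rw [hx3, ZMod.val_zero, zero_nsmul, add_zero]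
          exact A.add_mem hx2 hy2
        · show x.2.2 + y.2.2 = 0; rw [hx3, hy3, add_zero]
      inv_mem' := by
        rintro x ⟨hx1, hx2, hx3⟩
        refine ⟨?_, ?_, ?_⟩
        · show -x.1 = 0; rw [hx1, neg_zero]
        · show -x.2.1 + x.2.2.val • (x.1 : B) ∈ A
          rw [hx3, ZMod.val_zero, zero_nsmul, add_zero]
          exact A.neg_mem hx2
        · show -x.2.2 = 0; rw [hx3, neg_zero] }
  have hKmem : ∀ g : A × B × ZMod n,
      g ∈ K ↔ g.1 = 0 ∧ g.2.1 ∈ A ∧ g.2.2 = 0 := fun g => Iff.rfl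
  have hcomm : commutator (A × B × ZMod n) = K := by
    apply le_antisymm
    · rw [commutator_def, Subgroup.commutator_le]
      intro x _ y _
      rw [comm_formula]
      exact ⟨rfl, A.sub_mem (AddSubgroup.nsmul_mem A y.1.2 _) (AddSubgroup.nsmul_mem A x.1.2 _), rfl⟩
    · rintro g ⟨hg1, hg2, hg3⟩
      have hg : g = ⁅((0, 0, 1) : A × B × ZMod n), ((⟨g.2.1, hg2⟩, 0, 0) : A × B × ZMod n)⁆ := by
        rw [comm_formula]
        refine Prod.ext hg1 (Prod.ext ?_ hg3)
        show g.2.1 = (1 : ZMod n).val • ((⟨g.2.1, hg2⟩ : A) : B) - (0 : ZMod n).val • (((0 : A)) : B)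
        rw [smul_val_one, ZMod.val_zero, zero_nsmul, sub_zero]
      rw [hg, commutator_def]
      exact Subgroup.commutator_mem_commutator (Subgroup.mem_top _) (Subgroup.mem_top _)
  refine ⟨fun x y => comm_formula A n x y, fun g => by rw [hcomm]; exact hKmem g, ?_⟩
  refine ⟨{ toFun := fun g =>
              Multiplicative.ofAdd (⟨g.1.2.1, ((hKmem g.1).mp (hcomm ▸ g.2)).2.1⟩ : A)
            invFun := fun a =>
              ⟨(0, ((Multiplicative.toAdd a : A) : B), 0), by
                rw [hcomm]
                exact ⟨rfl, (Multiplicative.toAdd a).2, rfl⟩⟩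
            left_inv := ?_
            right_inv := ?_
            map_mul' := ?_ }⟩
  · rintro ⟨g, hg⟩
    have h := (hKmem g).mp (hcomm ▸ hg)
    ext
    · exact congrArg Subtype.val h.1.symm
    · rfl
    · exact h.2.2.symm
  · intro a
    rfl
  · rintro ⟨g, hg⟩ ⟨h, hh⟩
    have hg' := (hKmem g).mp (hcomm ▸ hg)
    have hh' := (hKmem h).mp (hcomm ▸ hh)
    apply Multiplicative.toAdd.injective
    apply Subtype.ext
    show (g * h).2.1 = g.2.1 + h.2.1
    rw [mul_def]
    show g.2.1 + g.2.2.val • ((h.1 : A) : B) + h.2.1 = g.2.1 + h.2.1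
    rw [hg'.2.2, ZMod.val_zero, zero_nsmul, add_zero]
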